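/- Let u,v>0 and let ξ_1,…,ξ_n be independent random variables each with distribution Gamma(u,v). Let ε ∈ (0,1) and q>0, and suppose n ≥ 10, (1−ε)·log n ≥ 2, and n^ε ≥ (3/2)·q·Γ(u)·log n. Then P( max_{1≤i≤n} ξ_i ≥ (1−ε)(log n)/v ) ≥ 1 − e^{−q}. -/

import Mathlib

open MeasureTheory ProbabilityTheory Real
open scoped ENNReal

lemma aux_int_exp {b : ℝ} (hb : 0 < b) (t : ℝ) :
    ∫ x in Set.Ioi t, Real.exp (-(b * x)) = Real.exp (-(b * t)) / b := by
  have hderiv : ∀ x ∈ Set.Ici t,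
      HasDerivAt (fun y => -Real.exp (-(b * y)) / b) (Real.exp (-(b * x))) x := by
    intro x _
    have h := (((hasDerivAt_id x).const_mul b).neg.exp.neg.div_const b)
    simpa [mul_comm, hb.ne'] using h
  have hint : MeasureTheory.IntegrableOn (fun x => Real.exp (-(b * x))) (Set.Ioi t) := by
    simpa [neg_mul] using exp_neg_integrableOn_Ioi t hb
  have htend : Filter.Tendsto (fun y => -Real.exp (-(b * y)) / b) Filter.atTop (nhds 0) := by
    have h1 : Filter.Tendsto (fun y : ℝ => Real.exp (-(b * y))) Filter.atTop (nhds 0) := by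
      have h := Real.tendsto_exp_atBot.comp
        (Filter.tendsto_id.const_mul_atTop_of_neg (r := -b) (by linarith))
      exact h.congr (fun y => by simp [neg_mul])
    simpa using (h1.neg.div_const b)
  have := MeasureTheory.integral_Ioi_of_hasDerivAt_of_tendsto' hderiv hint htend
  rw [this]; ring

lemma aux_gamma_tail {u v t : ℝ} (hu : 0 < u) (hv : 0 < v) (ht : 0 < t) :
    ENNReal.ofReal (v ^ u * t ^ (u - 1) * Real.exp (-(v * t)) /
        ((v + max (1 - u) 0 / t) * Real.Gamma u)) ≤ gammaMeasure u v (Set.Ici t) := by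
  set c := max (1 - u) 0 with hc
  have hc0 : 0 ≤ c := le_max_right _ _
  have hb0 : 0 < v + c / t := by positivity
  have hΓ : 0 < Real.Gamma u := Real.Gamma_pos_of_pos hu
  set K := v ^ u / Real.Gamma u * t ^ (u - 1) * Real.exp c with hK
  have hK0 : 0 ≤ K := by positivity
  have hpt : ∀ x ∈ Set.Ioi t, K * Real.exp (-((v + c / t) * x)) ≤ gammaPDFReal u v x := by
    intro x hx
    have hxt : t < x := hx
    have hx0 : 0 < x := ht.trans hxt
    rw [gammaPDFReal, if_pos hx0.le]
    have key : t ^ (u - 1) * Real.exp (c - c / t * x) ≤ x ^ (u - 1) := by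
      rcases le_or_gt 1 u with h1 | h1
      · have hcz : c = 0 := by rw [hc]; exact max_eq_right (by linarith)
        rw [hcz]
        simpa using Real.rpow_le_rpow ht.le hxt.le (by linarith)
      · have hcu : c = 1 - u := max_eq_left (by linarith)
        rw [Real.rpow_def_of_pos ht, Real.rpow_def_of_pos hx0, ← Real.exp_add,
          Real.exp_le_exp, hcu]
        have hlog : Real.log (x / t) ≤ x / t - 1 :=
          Real.log_le_sub_one_of_pos (by positivity)
        rw [Real.log_div hx0.ne' ht.ne'] at hlog
        have h2 : (1 - u) * (Real.log x - Real.log t) ≤ (1 - u) * (x / t - 1) :=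
          mul_le_mul_of_nonneg_left hlog (by linarith)
        have h3 : (1 - u) / t * x = (1 - u) * (x / t) := by ring
        nlinarith [h2, h3]
    have e1 : Real.exp c * Real.exp (-((v + c / t) * x)) =
        Real.exp (c - c / t * x) * Real.exp (-(v * x)) := by
      rw [← Real.exp_add, ← Real.exp_add]; congr 1; ring
    calc K * Real.exp (-((v + c / t) * x))
        = v ^ u / Real.Gamma u * t ^ (u - 1) *
            (Real.exp c * Real.exp (-((v + c / t) * x))) := by rw [hK]; ring
      _ = v ^ u / Real.Gamma u * (t ^ (u - 1) * Real.exp (c - c / t * x)) *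
            Real.exp (-(v * x)) := by rw [e1]; ring
      _ ≤ v ^ u / Real.Gamma u * x ^ (u - 1) * Real.exp (-(v * x)) := by
          gcongr
  have hint : MeasureTheory.IntegrableOn
      (fun x => Real.exp (-((v + c / t) * x))) (Set.Ioi t) := by
    have := exp_neg_integrableOn_Ioi t hb0
    refine this.congr_fun (fun x _ => by ring_nf) measurableSet_Ioi
  have hgint : ∫ x in Set.Ioi t, K * Real.exp (-((v + c / t) * x)) =
      v ^ u * t ^ (u - 1) * Real.exp (-(v * t)) / ((v + c / t) * Real.Gamma u) := by
    rw [MeasureTheory.integral_const_mul, aux_int_exp hb0]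
    have e1 : Real.exp (-(v * t)) = Real.exp c * Real.exp (-((v + c / t) * t)) := by
      rw [← Real.exp_add]; congr 1; field_simp; ring
    rw [hK, e1]
    field_simp
  calc ENNReal.ofReal (v ^ u * t ^ (u - 1) * Real.exp (-(v * t)) /
        ((v + c / t) * Real.Gamma u))
      = ENNReal.ofReal (∫ x in Set.Ioi t, K * Real.exp (-((v + c / t) * x))) := by
        rw [hgint]
    _ = ∫⁻ x in Set.Ioi t, ENNReal.ofReal (K * Real.exp (-((v + c / t) * x))) :=
        MeasureTheory.ofReal_integral_eq_lintegral_ofReal (hint.const_mul K)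
          (MeasureTheory.ae_of_all _ fun x => by positivity)
    _ ≤ ∫⁻ x in Set.Ioi t, gammaPDF u v x := by
        refine setLIntegral_mono ((measurable_gammaPDFReal u v).ennreal_ofReal) ?_
        intro x hx
        exact ENNReal.ofReal_le_ofReal (hpt x hx)
    _ ≤ ∫⁻ x in Set.Ici t, gammaPDF u v x :=
        lintegral_mono_set Set.Ioi_subset_Ici_self
    _ = gammaMeasure u v (Set.Ici t) := by
        rw [gammaMeasure, withDensity_apply _ measurableSet_Ici]

lemma aux_key {u v ε q : ℝ} {n : ℕ} (hu : 0 < u) (hv : 0 < v)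
    (hε : ε ∈ Set.Ioo (0 : ℝ) 1) (hq : 0 < q) (hn : 10 ≤ n)
    (hlog : 2 ≤ (1 - ε) * Real.log n)
    (hbig : (3 / 2) * q * Real.Gamma u * Real.log n ≤ (n : ℝ) ^ ε) :
    q / n ≤ v ^ u * ((1 - ε) * Real.log n / v) ^ (u - 1) *
        Real.exp (-(v * ((1 - ε) * Real.log n / v))) /
        ((v + max (1 - u) 0 / ((1 - ε) * Real.log n / v)) * Real.Gamma u) := by
  obtain ⟨hε0, hε1⟩ := hε
  have hn10 : (10 : ℝ) ≤ n := by exact_mod_cast hn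
  have hn0 : (0 : ℝ) < n := by linarith
  have hL0 : 0 ≤ Real.log n := Real.log_nonneg (by linarith)
  have hL2 : 2 ≤ Real.log n := by nlinarith
  have hΓ : 0 < Real.Gamma u := Real.Gamma_pos_of_pos hu
  set L := Real.log n with hLdef
  set s := (1 - ε) * L with hsdef
  have hs2 : 2 ≤ s := hlog
  have hs0 : 0 < s := by linarith
  set c := max (1 - u) 0 with hcdef
  have hc0 : 0 ≤ c := le_max_right _ _
  have hc1 : c ≤ 1 := max_le (by linarith) (by linarith)
  have hvt : v * (s / v) = s := by field_simp
  have htpow : (s / v) ^ (u - 1) = s ^ (u - 1) / v ^ (u - 1) :=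
    Real.div_rpow hs0.le hv.le (u - 1)
  have hvpow : v ^ u = v ^ (u - 1) * v := by
    rw [← Real.rpow_add_one hv.ne']; norm_num
  have hspow : s ^ (u - 1) * s = s ^ u := by
    rw [← Real.rpow_add_one hs0.ne']; norm_num
  have hct : c / (s / v) = c * v / s := by field_simp
  have hval : v ^ u * (s / v) ^ (u - 1) * Real.exp (-(v * (s / v))) /
      ((v + c / (s / v)) * Real.Gamma u) =
      s ^ u * Real.exp (-s) / ((s + c) * Real.Gamma u) := by
    rw [hvt, htpow, hct, hvpow, ← hspow]
    have hv1 : v ^ (u - 1) ≠ 0 := (Real.rpow_pos_of_pos hv _).ne'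
    field_simp
  rw [hval]
  have hden : 0 < (s + c) * Real.Gamma u := by positivity
  rw [div_le_div_iff₀ hn0 hden]
  have hs1 : (1 : ℝ) ≤ s ^ u := Real.one_le_rpow (by linarith) hu.le
  have hexp : Real.exp (-s) * n = (n : ℝ) ^ ε := by
    have h1 : Real.exp (-s) = (n : ℝ) ^ (ε - 1) := by
      rw [Real.rpow_def_of_pos hn0, hsdef, hLdef]
      congr 1; ring
    rw [h1, ← Real.rpow_add_one hn0.ne']
    norm_num
  have hsc : s + c ≤ (3 / 2) * L := by nlinarith
  have h1 : q * Real.Gamma u * (s + c) ≤ q * Real.Gamma u * ((3 / 2) * L) :=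
    mul_le_mul_of_nonneg_left hsc (by positivity)
  have h3 : (n : ℝ) ^ ε * 1 ≤ (n : ℝ) ^ ε * s ^ u :=
    mul_le_mul_of_nonneg_left hs1 (by positivity)
  have hfin : (n : ℝ) ^ ε * s ^ u = s ^ u * Real.exp (-s) * n := by
    rw [← hexp]; ring
  nlinarith [h1, hbig, h3, hfin]

theorem statement8 {Ω : Type*} [MeasureSpace Ω] [IsProbabilityMeasure (ℙ : Measure Ω)]
    (u v : ℝ) (hu : 0 < u) (hv : 0 < v) (n : ℕ)
    (ξ : Fin n → Ω → ℝ)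
    (hind : iIndepFun ξ (ℙ : Measure Ω))
    (hgamma : ∀ i, Measure.map (ξ i) (ℙ : Measure Ω) = gammaMeasure u v)
    (ε q : ℝ) (hε : ε ∈ Set.Ioo (0 : ℝ) 1) (hq : 0 < q)
    (hn : 10 ≤ n) (hlog : 2 ≤ (1 - ε) * Real.log n)
    (hbig : (3 / 2) * q * Real.Gamma u * Real.log n ≤ (n : ℝ) ^ ε) :
    ENNReal.ofReal (1 - Real.exp (-q)) ≤
      ℙ {ω | ∃ i, (1 - ε) * Real.log n / v ≤ ξ i ω} := by
  haveI : IsProbabilityMeasure (gammaMeasure u v) := isProbabilityMeasure_gammaMeasure hu hv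
  have hn10 : (10 : ℝ) ≤ n := by exact_mod_cast hn
  have hn0 : (0 : ℝ) < n := by linarith
  have hnne : n ≠ 0 := by omega
  set t : ℝ := (1 - ε) * Real.log n / v with htdef
  have hL0 : 0 ≤ Real.log n := Real.log_nonneg (by linarith)
  have ht0 : 0 < t := by
    have : 0 < (1 - ε) * Real.log n := by linarith
    positivity
  -- tail lower bound
  have hkey : ENNReal.ofReal (q / n) ≤ gammaMeasure u v (Set.Ici t) := by
    refine le_trans ?_ (aux_gamma_tail hu hv ht0)
    exact ENNReal.ofReal_le_ofReal (aux_key hu hv hε hq hn hlog hbig)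
  -- CDF upper bound
  have hIio : gammaMeasure u v (Set.Iio t) ≤ ENNReal.ofReal (Real.exp (-(q / n))) := by
    have h1 : gammaMeasure u v (Set.Iio t) = 1 - gammaMeasure u v (Set.Ici t) := by
      rw [← Set.compl_Ici, measure_compl measurableSet_Ici (measure_ne_top _ _), measure_univ]
    rw [h1]
    refine tsub_le_iff_right.mpr ?_
    calc (1 : ℝ≥0∞) = ENNReal.ofReal 1 := by simp
      _ ≤ ENNReal.ofReal (Real.exp (-(q / n)) + q / n) := by
          refine ENNReal.ofReal_le_ofReal ?_
          nlinarith [Real.add_one_le_exp (-(q / n))]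
      _ = ENNReal.ofReal (Real.exp (-(q / n))) + ENNReal.ofReal (q / n) :=
          ENNReal.ofReal_add (Real.exp_pos _).le (by positivity)
      _ ≤ ENNReal.ofReal (Real.exp (-(q / n))) + gammaMeasure u v (Set.Ici t) := by
          gcongr
  -- product bound
  have hprod : ℙ ({ω | ∃ i, t ≤ ξ i ω}ᶜ) ≤ ENNReal.ofReal (Real.exp (-q)) := by
    have hset : {ω : Ω | ∃ i, t ≤ ξ i ω}ᶜ = ⋂ i, (ξ i) ⁻¹' (Set.Iio t) := by
      ext ω
      simp [not_le]
    rw [hset, hind.meas_iInter (fun i => ⟨Set.Iio t, measurableSet_Iio, rfl⟩)]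
    have hmap : ∀ i, ℙ ((ξ i) ⁻¹' (Set.Iio t)) = gammaMeasure u v (Set.Iio t) := by
      intro i
      have haem : AEMeasurable (ξ i) ℙ := by
        by_contra h
        have h2 := hgamma i
        rw [Measure.map_of_not_aemeasurable h] at h2
        have := congrArg (fun μ : Measure ℝ => μ Set.univ) h2
        simp [measure_univ] at this
      rw [← Measure.map_apply_of_aemeasurable haem measurableSet_Iio, hgamma i]
    calc ∏ i, ℙ ((ξ i) ⁻¹' (Set.Iio t))
        ≤ ∏ _i : Fin n, ENNReal.ofReal (Real.exp (-(q / n))) :=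
          Finset.prod_le_prod' (fun i _ => by rw [hmap i]; exact hIio)
      _ = ENNReal.ofReal (Real.exp (-(q / n))) ^ n := by
          simp [Finset.prod_const]
      _ = ENNReal.ofReal (Real.exp (-(q / n)) ^ n) :=
          (ENNReal.ofReal_pow (Real.exp_pos _).le n).symm
      _ = ENNReal.ofReal (Real.exp (-q)) := by
          rw [← Real.exp_nat_mul]
          congr 1
          field_simp
  -- conclude
  have huniv : (1 : ℝ≥0∞) ≤ ℙ {ω | ∃ i, t ≤ ξ i ω} + ℙ ({ω | ∃ i, t ≤ ξ i ω}ᶜ) := by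
    calc (1 : ℝ≥0∞) = ℙ ({ω | ∃ i, t ≤ ξ i ω} ∪ {ω | ∃ i, t ≤ ξ i ω}ᶜ) := by
          rw [Set.union_compl_self, measure_univ]
      _ ≤ ℙ {ω | ∃ i, t ≤ ξ i ω} + ℙ ({ω | ∃ i, t ≤ ξ i ω}ᶜ) := measure_union_le _ _
  calc ENNReal.ofReal (1 - Real.exp (-q))
      = 1 - ENNReal.ofReal (Real.exp (-q)) := by
        rw [ENNReal.ofReal_sub _ (Real.exp_pos _).le, ENNReal.ofReal_one]
    _ ≤ 1 - ℙ ({ω | ∃ i, t ≤ ξ i ω}ᶜ) := tsub_le_tsub_left hprod 1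
    _ ≤ ℙ {ω | ∃ i, t ≤ ξ i ω} := tsub_le_iff_right.mpr huniv
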